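/- arXiv:2109.02750 — 7 statements merged into one kernel-verified Lean document; each statement's English description precedes it below -/
import Mathlib

section
/- Let 𝒜 be a complex unital Banach algebra and let p, q, a ∈ 𝒜 satisfy p * q = p, q * p = q, and q * a = a * q. Then the spectral radius of p * a is at most the spectral radius of a * q. -/
/-- In a complex unital Banach algebra, if `p * q = p`, `q * p = q` and
`q * a = a * q`, then the spectral radius of `p * a` is at most that of `a * q`. -/
theorem spectralRadius_mul_le_of_projections {A : Type*} [NormedRing A]
    [NormedAlgebra ℂ A] [CompleteSpace A] (p q a : A)
    (hpq : p * q = p) (hqp : q * p = q) (hqa : q * a = a * q) :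
    spectralRadius ℂ (p * a) ≤ spectralRadius ℂ (a * q) := by
  have h1 : p * a = p * (a * q) := by
    conv_lhs => rw [← hpq, mul_assoc, hqa]
  have h2 : (a * q) * p = a * q := by rw [mul_assoc, hqp]
  have hspec : spectrum ℂ (p * a) \ {0} = spectrum ℂ (a * q) \ {0} := by
    rw [h1, spectrum.nonzero_mul_comm, h2]
  rw [spectralRadius, spectralRadius]
  refine iSup₂_le fun k hk => ?_
  rcases eq_or_ne k 0 with rfl | hk0
  · simp
  · have : k ∈ spectrum ℂ (a * q) := by
      have : k ∈ spectrum ℂ (p * a) \ {0} := ⟨hk, hk0⟩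
      rw [hspec] at this
      exact this.1
    exact le_iSup₂ (f := fun k (_ : k ∈ spectrum ℂ (a * q)) => (‖k‖₊ : ENNReal)) k this
end

section
/- Let E be a complex Banach space, let P and π be bounded idempotent operators on E (P ∘ P = P and π ∘ π = π) with ker P = ker π, and let A be a bounded operator on E with A ∘ π = π ∘ A. Then the spectral radius of P ∘ A is at most the spectral radius of A ∘ π. -/
open Filter ENNReal Topology

/-- If `P` and `π` are bounded idempotent operators on a complex Banach space with the
same kernel, and `A` is a bounded operator commuting with `π`, then the spectral radius
of `P ∘ A` is at most the spectral radius of `A ∘ π`. -/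
theorem spectralRadius_comp_le_of_idempotents {E : Type*} [NormedAddCommGroup E]
    [NormedSpace ℂ E] [CompleteSpace E] (P π A : E →L[ℂ] E)
    (hP : P ∘L P = P) (hπ : π ∘L π = π)
    (hker : LinearMap.ker (P : E →ₗ[ℂ] E) = LinearMap.ker (π : E →ₗ[ℂ] E))
    (hA : A ∘L π = π ∘L A) :
    spectralRadius ℂ (P ∘L A) ≤ spectralRadius ℂ (A ∘L π) := by
  -- basic algebraic identities, phrased multiplicatively
  have hPπ : P * π = P := by
    ext x
    have hx : x - π x ∈ LinearMap.ker (π : E →ₗ[ℂ] E) := by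
      simp [LinearMap.mem_ker, map_sub, ← ContinuousLinearMap.comp_apply, hπ]
    rw [← hker] at hx
    have := LinearMap.mem_ker.mp hx
    simp only [ContinuousLinearMap.coe_coe, map_sub, sub_eq_zero] at this
    simpa [ContinuousLinearMap.mul_apply] using this.symm
  have hπP : π * P = π := by
    ext x
    have hx : x - P x ∈ LinearMap.ker (P : E →ₗ[ℂ] E) := by
      simp [LinearMap.mem_ker, map_sub, ← ContinuousLinearMap.comp_apply, hP]
    rw [hker] at hx
    have := LinearMap.mem_ker.mp hx
    simp only [ContinuousLinearMap.coe_coe, map_sub, sub_eq_zero] at this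
    simpa [ContinuousLinearMap.mul_apply] using this.symm
  have hππ : π * π = π := hπ
  have hcomm : π * A = A * π := hA.symm
  have hcomm2 : ∀ X : E →L[ℂ] E, π * (A * X) = A * (π * X) := by
    intro X; rw [← mul_assoc, hcomm, mul_assoc]
  have hπP2 : ∀ X : E →L[ℂ] E, π * (P * X) = π * X := by
    intro X; rw [← mul_assoc, hπP]
  have hB : P ∘L A = P * A := rfl
  have hC : A ∘L π = A * π := rfl
  rw [hB, hC]
  have hCn : ∀ n : ℕ, (A * π) ^ (n + 1) = A ^ (n + 1) * π := by
    intro n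
    induction n with
    | zero => simp
    | succ n ih =>
      rw [pow_succ, ih, pow_succ]
      calc A ^ (n + 1) * π * (A * π)
          = A ^ (n + 1) * (π * (A * π)) := by rw [mul_assoc]
        _ = A ^ (n + 1) * (A * (π * π)) := by rw [hcomm2]
        _ = A ^ (n + 1) * A * π := by rw [hππ, mul_assoc]
  have hBn : ∀ n : ℕ, (P * A) ^ (n + 1) = P * (A * π) ^ (n + 1) := by
    intro n
    induction n with
    | zero =>
      rw [pow_one, pow_one, ← hcomm, ← mul_assoc, hPπ]
    | succ n ih =>
      rw [pow_succ, ih, hCn n, hCn (n + 1), pow_succ]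
      calc P * (A ^ (n + 1) * π) * (P * A)
          = P * (A ^ (n + 1) * (π * (P * A))) := by rw [mul_assoc, mul_assoc]
        _ = P * (A ^ (n + 1) * (π * A)) := by rw [hπP2]
        _ = P * (A ^ (n + 1) * (A * π)) := by rw [hcomm]
        _ = P * (A ^ (n + 1) * A * π) := by rw [mul_assoc (A ^ (n + 1))]
  have hnorm : ∀ n : ℕ, ‖(P * A) ^ (n + 1)‖₊ ≤ ‖P‖₊ * ‖(A * π) ^ (n + 1)‖₊ := by
    intro n
    rw [hBn n]
    exact nnnorm_mul_le _ _
  have hlim : Tendsto (fun n : ℕ => (‖(A * π) ^ n‖₊ : ℝ≥0∞) ^ (1 / n : ℝ)) atTop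
      (𝓝 (spectralRadius ℂ (A * π))) :=
    spectrum.pow_nnnorm_pow_one_div_tendsto_nhds_spectralRadius (A * π)
  have hliminf : spectralRadius ℂ (P * A) ≤
      atTop.liminf fun n : ℕ => (‖(P * A) ^ n‖₊ : ℝ≥0∞) ^ (1 / n : ℝ) :=
    spectrum.spectralRadius_le_liminf_pow_nnnorm_pow_one_div ℂ (P * A)
  have key : ∀ ε : ℝ≥0∞, 1 < ε → ε ≠ ∞ →
      spectralRadius ℂ (P * A) ≤ ε * spectralRadius ℂ (A * π) := by
    intro ε hε hεtop
    refine hliminf.trans ?_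
    have hev : ∀ᶠ n : ℕ in atTop,
        (‖(P * A) ^ n‖₊ : ℝ≥0∞) ^ (1 / n : ℝ) ≤ ε * (‖(A * π) ^ n‖₊ : ℝ≥0∞) ^ (1 / n : ℝ) := by
      have h1 : ∀ᶠ n : ℕ in atTop, (‖P‖₊ : ℝ≥0∞) ^ (1 / n : ℝ) ≤ ε :=
        ENNReal.eventually_pow_one_div_le (ENNReal.coe_ne_top) hε
      filter_upwards [h1, eventually_ge_atTop 1] with n hn hn1
      obtain ⟨m, rfl⟩ : ∃ m, n = m + 1 := ⟨n - 1, by omega⟩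
      have hle : (‖(P * A) ^ (m + 1)‖₊ : ℝ≥0∞) ≤ (‖P‖₊ : ℝ≥0∞) * (‖(A * π) ^ (m + 1)‖₊ : ℝ≥0∞) := by
        rw [← ENNReal.coe_mul]
        exact_mod_cast hnorm m
      calc (‖(P * A) ^ (m + 1)‖₊ : ℝ≥0∞) ^ (1 / (m + 1 : ℕ) : ℝ)
          ≤ ((‖P‖₊ : ℝ≥0∞) * (‖(A * π) ^ (m + 1)‖₊ : ℝ≥0∞)) ^ (1 / (m + 1 : ℕ) : ℝ) :=
            ENNReal.rpow_le_rpow hle (by positivity)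
        _ = (‖P‖₊ : ℝ≥0∞) ^ (1 / (m + 1 : ℕ) : ℝ) *
              (‖(A * π) ^ (m + 1)‖₊ : ℝ≥0∞) ^ (1 / (m + 1 : ℕ) : ℝ) := by
            rw [ENNReal.mul_rpow_of_nonneg _ _ (by positivity)]
        _ ≤ ε * (‖(A * π) ^ (m + 1)‖₊ : ℝ≥0∞) ^ (1 / (m + 1 : ℕ) : ℝ) :=
            mul_le_mul_left hn _
    calc atTop.liminf (fun n : ℕ => (‖(P * A) ^ n‖₊ : ℝ≥0∞) ^ (1 / n : ℝ))
        ≤ atTop.liminf (fun n : ℕ => ε * (‖(A * π) ^ n‖₊ : ℝ≥0∞) ^ (1 / n : ℝ)) :=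
          Filter.liminf_le_liminf hev
      _ = ε * spectralRadius ℂ (A * π) :=
          (ENNReal.Tendsto.const_mul hlim (Or.inr hεtop)).liminf_eq
  refine ENNReal.le_of_forall_lt_one_mul_le fun ε hε => ?_
  rcases eq_or_ne ε 0 with rfl | hε0
  · simp
  have hεtop : ε ≠ ∞ := (hε.trans_le le_top).ne
  have h1 : 1 < ε⁻¹ := ENNReal.one_lt_inv.mpr hε
  have h2 : ε⁻¹ ≠ ∞ := by simpa using hε0
  calc ε * spectralRadius ℂ (P * A) ≤ ε * (ε⁻¹ * spectralRadius ℂ (A * π)) :=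
        mul_le_mul_right (key ε⁻¹ h1 h2) ε
    _ = (ε * ε⁻¹) * spectralRadius ℂ (A * π) := by rw [mul_assoc]
    _ = spectralRadius ℂ (A * π) := by rw [ENNReal.mul_inv_cancel hε0 hεtop, one_mul]
end

section
/- Let (M,d) be a compact metric space, α ∈ (0,1], and let T : M → M be a homeomorphism whose inverse T⁻¹ is Lipschitz with constant Λ > 1. Let h : M → ℂ be α-Hölder with constant H, and suppose there are constants C₀ > 0 and θ > 0 such that sup_{x∈M} ∏_{k=0}^{n-1} |h(T^{-k}x)| ≤ C₀·θⁿ for every n ≥ 0. Then there exists C > 0 such that for every n ≥ 1 and all x, y ∈ M: |∏_{k=0}^{n-1} h(T^{-k}x) − ∏_{k=0}^{n-1} h(T^{-k}y)| ≤ C·(θΛ^α)ⁿ·d(x,y)^α. -/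
/-- Telescoping estimate for differences of products of complex numbers. -/
lemma abs_prod_sub_prod_le (a b : ℕ → ℂ) :
    ∀ n : ℕ, ‖(∏ k ∈ Finset.range n, a k) - ∏ k ∈ Finset.range n, b k‖ ≤
      ∑ k ∈ Finset.range n, (∏ j ∈ Finset.range k, ‖a j‖) *
        ‖a k - b k‖ * ∏ j ∈ Finset.Ico (k + 1) n, ‖b j‖ := by
  intro n
  induction n with
  | zero => simp
  | succ n ih =>
    have key : (∏ k ∈ Finset.range (n + 1), a k) - ∏ k ∈ Finset.range (n + 1), b k =
        (∏ k ∈ Finset.range n, a k) * (a n - b n) +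
          ((∏ k ∈ Finset.range n, a k) - ∏ k ∈ Finset.range n, b k) * b n := by
      rw [Finset.prod_range_succ, Finset.prod_range_succ]; ring
    rw [key]
    refine (norm_add_le _ _).trans ?_
    rw [Finset.sum_range_succ]
    have h1 : ‖(∏ k ∈ Finset.range n, a k) * (a n - b n)‖ ≤
        (∏ j ∈ Finset.range n, ‖a j‖) * ‖a n - b n‖ *
          ∏ j ∈ Finset.Ico (n + 1) (n + 1), ‖b j‖ := by
      simp [norm_mul, norm_prod]
    have h2 : ‖((∏ k ∈ Finset.range n, a k) - ∏ k ∈ Finset.range n, b k) * b n‖ ≤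
        ∑ k ∈ Finset.range n, (∏ j ∈ Finset.range k, ‖a j‖) *
          ‖a k - b k‖ * ∏ j ∈ Finset.Ico (k + 1) (n + 1), ‖b j‖ := by
      rw [norm_mul]
      calc ‖(∏ k ∈ Finset.range n, a k) - ∏ k ∈ Finset.range n, b k‖ *
            ‖b n‖ ≤
          (∑ k ∈ Finset.range n, (∏ j ∈ Finset.range k, ‖a j‖) *
            ‖a k - b k‖ * ∏ j ∈ Finset.Ico (k + 1) n, ‖b j‖) *
            ‖b n‖ := by
            exact mul_le_mul_of_nonneg_right ih (norm_nonneg _)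
        _ = _ := by
            rw [Finset.sum_mul]
            refine Finset.sum_congr rfl fun k hk => ?_
            have hkn : k + 1 ≤ n := Finset.mem_range.mp hk
            rw [Finset.prod_Ico_succ_top hkn]
            ring
    linarith
  
/-- `d(T⁻ᵏx, T⁻ᵏy) ≤ Λᵏ d(x,y)`. -/
lemma iterate_dist_le {M : Type*} [MetricSpace M] (T : M ≃ₜ M) (Λ : ℝ) (hΛ0 : 0 ≤ Λ)
    (hLip : ∀ x y : M, dist (T.symm x) (T.symm y) ≤ Λ * dist x y) (k : ℕ) (x y : M) :
    dist ((T.symm)^[k] x) ((T.symm)^[k] y) ≤ Λ ^ k * dist x y := by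
  induction k with
  | zero => simp
  | succ k ih =>
    rw [Function.iterate_succ_apply', Function.iterate_succ_apply']
    calc dist (T.symm ((T.symm)^[k] x)) (T.symm ((T.symm)^[k] y)) ≤
        Λ * dist ((T.symm)^[k] x) ((T.symm)^[k] y) := hLip _ _
      _ ≤ Λ * (Λ ^ k * dist x y) := by
          exact mul_le_mul_of_nonneg_left ih hΛ0
      _ = Λ ^ (k + 1) * dist x y := by ring

/-- Hölder estimate on the cocycle products `∏_{k<n} h(T^{-k}x)`: if `T⁻¹` is
`Λ`-Lipschitz, `h` is `α`-Hölder and the sup-products are bounded by `C₀ θⁿ`, then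
the products are `α`-Hölder with constant `C (θ Λ^α)ⁿ`. -/
theorem holder_estimate_prod_transfer {M : Type*} [MetricSpace M] [CompactSpace M]
    (α : ℝ) (hα : 0 < α) (hα1 : α ≤ 1)
    (T : M ≃ₜ M) (Λ : ℝ) (hΛ : 1 < Λ)
    (hLip : ∀ x y : M, dist (T.symm x) (T.symm y) ≤ Λ * dist x y)
    (h : M → ℂ) (H : ℝ)
    (hHold : ∀ x y : M, ‖h x - h y‖ ≤ H * dist x y ^ α)
    (C₀ θ : ℝ) (hC₀ : 0 < C₀) (hθ : 0 < θ)
    (hbound : ∀ (n : ℕ) (x : M),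
      ∏ k ∈ Finset.range n, ‖h ((T.symm)^[k] x)‖ ≤ C₀ * θ ^ n) :
    ∃ C > 0, ∀ n : ℕ, 1 ≤ n → ∀ x y : M,
      ‖(∏ k ∈ Finset.range n, h ((T.symm)^[k] x)) -
          ∏ k ∈ Finset.range n, h ((T.symm)^[k] y)‖ ≤
        C * (θ * Λ ^ α) ^ n * dist x y ^ α := by
  have hΛ0 : (0 : ℝ) < Λ := lt_trans one_pos hΛ
  set L : ℝ := Λ ^ α with hL
  have hL1 : 1 < L := Real.one_lt_rpow_iff_of_pos hΛ0 |>.mpr (Or.inl ⟨hΛ, hα⟩)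
  have hL0 : 0 < L := lt_trans one_pos hL1
  set C : ℝ := C₀ ^ 2 * (|H| + 1) / (θ * (L - 1)) with hC
  have hCpos : 0 < C := by
    apply div_pos
    · positivity
    · exact mul_pos hθ (by linarith)
  refine ⟨C, hCpos, fun n hn x y => ?_⟩
  have hd0 : (0 : ℝ) ≤ dist x y := dist_nonneg
  have hdα : (0 : ℝ) ≤ dist x y ^ α := Real.rpow_nonneg hd0 α
  -- bound each telescoping term
  have hterm : ∀ k ∈ Finset.range n,
      (∏ j ∈ Finset.range k, ‖h ((T.symm)^[j] x)‖) *
        ‖h ((T.symm)^[k] x) - h ((T.symm)^[k] y)‖ *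
        ∏ j ∈ Finset.Ico (k + 1) n, ‖h ((T.symm)^[j] y)‖ ≤
      (C₀ * θ ^ k) * (|H| * L ^ k * dist x y ^ α) * (C₀ * θ ^ (n - (k + 1))) := by
    intro k hk
    have hk' : k + 1 ≤ n := Finset.mem_range.mp hk
    -- head product
    have h1 : ∏ j ∈ Finset.range k, ‖h ((T.symm)^[j] x)‖ ≤ C₀ * θ ^ k :=
      hbound k x
    -- middle factor
    have h2 : ‖h ((T.symm)^[k] x) - h ((T.symm)^[k] y)‖ ≤
        |H| * L ^ k * dist x y ^ α := by
      have hd : dist ((T.symm)^[k] x) ((T.symm)^[k] y) ≤ Λ ^ k * dist x y :=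
        iterate_dist_le T Λ hΛ0.le hLip k x y
      have hd' : dist ((T.symm)^[k] x) ((T.symm)^[k] y) ^ α ≤
          (Λ ^ k * dist x y) ^ α :=
        Real.rpow_le_rpow dist_nonneg hd hα.le
      have heq : (Λ ^ k * dist x y) ^ α = L ^ k * dist x y ^ α := by
        rw [Real.mul_rpow (by positivity) hd0, hL, ← Real.rpow_natCast Λ k,
          ← Real.rpow_natCast (Λ ^ α) k, ← Real.rpow_mul hΛ0.le, ← Real.rpow_mul hΛ0.le]
        ring_nf
      calc ‖h ((T.symm)^[k] x) - h ((T.symm)^[k] y)‖ ≤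
          H * dist ((T.symm)^[k] x) ((T.symm)^[k] y) ^ α := hHold _ _
        _ ≤ |H| * dist ((T.symm)^[k] x) ((T.symm)^[k] y) ^ α := by
            exact mul_le_mul_of_nonneg_right (le_abs_self H) (Real.rpow_nonneg dist_nonneg α)
        _ ≤ |H| * (Λ ^ k * dist x y) ^ α :=
            mul_le_mul_of_nonneg_left hd' (abs_nonneg H)
        _ = |H| * (L ^ k * dist x y ^ α) := by rw [heq]
        _ = |H| * L ^ k * dist x y ^ α := by ring
    -- tail product
    have h3 : ∏ j ∈ Finset.Ico (k + 1) n, ‖h ((T.symm)^[j] y)‖ ≤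
        C₀ * θ ^ (n - (k + 1)) := by
      have hsh : ∏ j ∈ Finset.Ico (k + 1) n, ‖h ((T.symm)^[j] y)‖ =
          ∏ i ∈ Finset.range (n - (k + 1)),
            ‖h ((T.symm)^[i] ((T.symm)^[k + 1] y))‖ := by
        rw [Finset.prod_Ico_eq_prod_range]
        refine Finset.prod_congr rfl fun i _ => ?_
        rw [Nat.add_comm (k + 1) i, Function.iterate_add_apply]
      rw [hsh]
      exact hbound (n - (k + 1)) _
    have hnn1 : (0 : ℝ) ≤ ∏ j ∈ Finset.range k, ‖h ((T.symm)^[j] x)‖ :=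
      Finset.prod_nonneg fun _ _ => norm_nonneg _
    have hnn2 : (0 : ℝ) ≤ ‖h ((T.symm)^[k] x) - h ((T.symm)^[k] y)‖ :=
      norm_nonneg _
    have hnn3 : (0 : ℝ) ≤ ∏ j ∈ Finset.Ico (k + 1) n, ‖h ((T.symm)^[j] y)‖ :=
      Finset.prod_nonneg fun _ _ => norm_nonneg _
    have hmid0 : (0 : ℝ) ≤ |H| * L ^ k * dist x y ^ α := by positivity
    exact mul_le_mul (mul_le_mul h1 h2 hnn2 (by positivity)) h3 hnn3 (by positivity)
  calc ‖(∏ k ∈ Finset.range n, h ((T.symm)^[k] x)) -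
        ∏ k ∈ Finset.range n, h ((T.symm)^[k] y)‖ ≤
      ∑ k ∈ Finset.range n, (∏ j ∈ Finset.range k, ‖h ((T.symm)^[j] x)‖) *
        ‖h ((T.symm)^[k] x) - h ((T.symm)^[k] y)‖ *
        ∏ j ∈ Finset.Ico (k + 1) n, ‖h ((T.symm)^[j] y)‖ :=
      abs_prod_sub_prod_le _ _ n
    _ ≤ ∑ k ∈ Finset.range n,
        (C₀ * θ ^ k) * (|H| * L ^ k * dist x y ^ α) * (C₀ * θ ^ (n - (k + 1))) :=
      Finset.sum_le_sum hterm
    _ = ∑ k ∈ Finset.range n, C₀ ^ 2 * |H| * θ ^ (n - 1) * L ^ k * dist x y ^ α := by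
        refine Finset.sum_congr rfl fun k hk => ?_
        have hk' : k + 1 ≤ n := Finset.mem_range.mp hk
        have : θ ^ k * θ ^ (n - (k + 1)) = θ ^ (n - 1) := by
          rw [← pow_add]
          congr 1
          omega
        calc (C₀ * θ ^ k) * (|H| * L ^ k * dist x y ^ α) * (C₀ * θ ^ (n - (k + 1)))
            = C₀ ^ 2 * |H| * (θ ^ k * θ ^ (n - (k + 1))) * L ^ k * dist x y ^ α := by ring
          _ = C₀ ^ 2 * |H| * θ ^ (n - 1) * L ^ k * dist x y ^ α := by rw [this]
    _ = C₀ ^ 2 * |H| * θ ^ (n - 1) * (∑ k ∈ Finset.range n, L ^ k) * dist x y ^ α := by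
        rw [Finset.mul_sum, Finset.sum_mul]
    _ ≤ C₀ ^ 2 * (|H| + 1) * θ ^ (n - 1) * (L ^ n / (L - 1)) * dist x y ^ α := by
        have hS : ∑ k ∈ Finset.range n, L ^ k ≤ L ^ n / (L - 1) := by
          rw [geom_sum_eq (ne_of_gt hL1)]
          gcongr <;> linarith
        gcongr <;> first | positivity | linarith [abs_nonneg H]
    _ = C * (θ * L) ^ n * dist x y ^ α := by
        have hn1 : n - 1 + 1 = n := Nat.succ_pred_eq_of_pos hn
        have hθn : θ ^ n = θ * θ ^ (n - 1) := by
          rw [← pow_succ', hn1]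
        have hθne : θ ≠ 0 := ne_of_gt hθ
        have hLne : L - 1 ≠ 0 := by linarith
        rw [hC, mul_pow, hθn]
        field_simp
end

section
/- Let (M,d) be a compact metric space, α ∈ (0,1], and let T : M → M be a homeomorphism whose inverse T⁻¹ is Lipschitz with constant Λ > 1. Let E be a complex Banach space and A : M → B(E) be α-Hölder with constant H for the operator norm, and suppose there are constants C₀ > 0 and θ > 0 such that sup_{x∈M} ‖A_n(x)‖ ≤ C₀·θⁿ for every n ≥ 0, where A_n(x) := A(x)∘A(T⁻¹x)∘⋯∘A(T^{-(n-1)}x). Then there exists C > 0 such that for every n ≥ 1 and all x, y ∈ M: ‖A_n(x) − A_n(y)‖ ≤ C·(θΛ^α)ⁿ·d(x,y)^α. -/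
/-- The cocycle products `A_n(x) = A(x) ∘ A(T⁻¹x) ∘ ⋯ ∘ A(T^{-(n-1)}x)` of a map
`A : M → B(E)` over the inverse of a homeomorphism `T`. -/
noncomputable def transferCocycle {M : Type*} [TopologicalSpace M] {E : Type*}
    [NormedAddCommGroup E] [NormedSpace ℂ E] (T : M ≃ₜ M) (A : M → E →L[ℂ] E)
    (n : ℕ) (x : M) : E →L[ℂ] E :=
  ((List.range n).map fun k => A ((T.symm)^[k] x)).prod

lemma transferCocycle_zero {M : Type*} [TopologicalSpace M] {E : Type*}
    [NormedAddCommGroup E] [NormedSpace ℂ E] (T : M ≃ₜ M) (A : M → E →L[ℂ] E)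
    (x : M) : transferCocycle T A 0 x = 1 := by
  simp [transferCocycle]

lemma transferCocycle_succ {M : Type*} [TopologicalSpace M] {E : Type*}
    [NormedAddCommGroup E] [NormedSpace ℂ E] (T : M ≃ₜ M) (A : M → E →L[ℂ] E)
    (n : ℕ) (x : M) :
    transferCocycle T A (n + 1) x = A x * transferCocycle T A n (T.symm x) := by
  unfold transferCocycle
  rw [List.range_succ_eq_map, List.map_cons, List.prod_cons, List.map_map]
  simp only [Function.iterate_zero_apply, Function.comp_def, Function.iterate_succ_apply]

lemma transferCocycle_telescope {M : Type*} [TopologicalSpace M] {E : Type*}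
    [NormedAddCommGroup E] [NormedSpace ℂ E] (T : M ≃ₜ M) (A : M → E →L[ℂ] E)
    (n : ℕ) (x y : M) :
    transferCocycle T A n x - transferCocycle T A n y =
      ∑ k ∈ Finset.range n, transferCocycle T A k x *
        (A ((T.symm)^[k] x) - A ((T.symm)^[k] y)) *
        transferCocycle T A (n - 1 - k) ((T.symm)^[k + 1] y) := by
  induction n generalizing x y with
  | zero => simp [transferCocycle_zero]
  | succ n ih =>
    rw [Finset.sum_range_succ']
    have h0 : transferCocycle T A 0 x *
        (A ((T.symm)^[0] x) - A ((T.symm)^[0] y)) *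
        transferCocycle T A (n + 1 - 1 - 0) ((T.symm)^[0 + 1] y)
        = (A x - A y) * transferCocycle T A n (T.symm y) := by
      simp [transferCocycle_zero]
    rw [h0]
    have hterm : ∀ k ∈ Finset.range n,
        transferCocycle T A (k + 1) x *
          (A ((T.symm)^[k + 1] x) - A ((T.symm)^[k + 1] y)) *
          transferCocycle T A (n + 1 - 1 - (k + 1)) ((T.symm)^[k + 1 + 1] y)
        = A x * (transferCocycle T A k (T.symm x) *
            (A ((T.symm)^[k] (T.symm x)) - A ((T.symm)^[k] (T.symm y))) *
            transferCocycle T A (n - 1 - k) ((T.symm)^[k + 1] (T.symm y))) := by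
      intro k hk
      have h1 : n + 1 - 1 - (k + 1) = n - 1 - k := by omega
      rw [transferCocycle_succ, h1]
      simp only [Function.iterate_succ_apply, mul_assoc]
    rw [Finset.sum_congr rfl hterm, ← Finset.mul_sum, ← ih,
      transferCocycle_succ T A n x, transferCocycle_succ T A n y]
    noncomm_ring

lemma dist_iterate_le {M : Type*} [MetricSpace M] (T : M ≃ₜ M) (Λ : ℝ)
    (hΛ : 0 < Λ)
    (hLip : ∀ x y : M, dist (T.symm x) (T.symm y) ≤ Λ * dist x y)
    (k : ℕ) (x y : M) :
    dist ((T.symm)^[k] x) ((T.symm)^[k] y) ≤ Λ ^ k * dist x y := by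
  induction k generalizing x y with
  | zero => simp
  | succ k ih =>
    rw [Function.iterate_succ_apply]
    calc dist ((T.symm)^[k] (T.symm x)) ((T.symm)^[k] (T.symm y))
        ≤ Λ ^ k * dist (T.symm x) (T.symm y) := ih _ _
      _ ≤ Λ ^ k * (Λ * dist x y) := by
          have := hLip x y
          have hpk : (0:ℝ) ≤ Λ ^ k := by positivity
          nlinarith
      _ = Λ ^ (k + 1) * dist x y := by ring

/-- Hölder estimate on the operator cocycle products: if `T⁻¹` is `Λ`-Lipschitz,
`A : M → B(E)` is `α`-Hölder in operator norm and `sup_x ‖A_n(x)‖ ≤ C₀ θⁿ`, then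
`‖A_n(x) − A_n(y)‖ ≤ C (θ Λ^α)ⁿ d(x,y)^α`. -/
theorem holder_estimate_cocycle {M : Type*} [MetricSpace M] [CompactSpace M]
    {E : Type*} [NormedAddCommGroup E] [NormedSpace ℂ E]
    (α : ℝ) (hα : 0 < α) (hα1 : α ≤ 1)
    (T : M ≃ₜ M) (Λ : ℝ) (hΛ : 1 < Λ)
    (hLip : ∀ x y : M, dist (T.symm x) (T.symm y) ≤ Λ * dist x y)
    (A : M → E →L[ℂ] E) (H : ℝ)
    (hHold : ∀ x y : M, ‖A x - A y‖ ≤ H * dist x y ^ α)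
    (C₀ θ : ℝ) (hC₀ : 0 < C₀) (hθ : 0 < θ)
    (hbound : ∀ (n : ℕ) (x : M), ‖transferCocycle T A n x‖ ≤ C₀ * θ ^ n) :
    ∃ C > 0, ∀ n : ℕ, 1 ≤ n → ∀ x y : M,
      ‖transferCocycle T A n x - transferCocycle T A n y‖ ≤
        C * (θ * Λ ^ α) ^ n * dist x y ^ α := by
  have hΛ0 : (0:ℝ) < Λ := lt_trans one_pos hΛ
  set r : ℝ := Λ ^ α with hr_def
  have hr1 : 1 < r := by
    rw [hr_def]
    exact Real.one_lt_rpow_iff_of_pos hΛ0 |>.2 (Or.inl ⟨hΛ, hα⟩)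
  have hr0 : (0:ℝ) < r := lt_trans one_pos hr1
  set H' : ℝ := max H 0 with hH'_def
  have hH'0 : 0 ≤ H' := le_max_right _ _
  have hHold' : ∀ x y : M, ‖A x - A y‖ ≤ H' * dist x y ^ α := by
    intro x y
    refine le_trans (hHold x y) ?_
    have : (0:ℝ) ≤ dist x y ^ α := Real.rpow_nonneg dist_nonneg _
    nlinarith [le_max_left H 0]
  set K : ℝ := C₀ ^ 2 * H' / (θ * (r - 1)) with hK_def
  have hK0 : 0 ≤ K := by
    apply div_nonneg
    · positivity
    · have : (0:ℝ) < r - 1 := by linarith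
      positivity
  refine ⟨K + 1, by linarith, ?_⟩
  rintro n hn x y
  obtain ⟨m, rfl⟩ : ∃ m, n = m + 1 := ⟨n - 1, by omega⟩
  set d : ℝ := dist x y with hd_def
  have hd0 : (0:ℝ) ≤ d := dist_nonneg
  have hdα : (0:ℝ) ≤ d ^ α := Real.rpow_nonneg hd0 _
  rw [transferCocycle_telescope]
  -- bound each term
  have hterm : ∀ k ∈ Finset.range (m + 1),
      ‖transferCocycle T A k x *
        (A ((T.symm)^[k] x) - A ((T.symm)^[k] y)) *
        transferCocycle T A (m + 1 - 1 - k) ((T.symm)^[k + 1] y)‖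
      ≤ (C₀ ^ 2 * H' * θ ^ m * d ^ α) * r ^ k := by
    intro k hk
    rw [Finset.mem_range] at hk
    have hmid : ‖A ((T.symm)^[k] x) - A ((T.symm)^[k] y)‖ ≤ H' * (r ^ k * d ^ α) := by
      refine le_trans (hHold' _ _) ?_
      have hdist : dist ((T.symm)^[k] x) ((T.symm)^[k] y) ≤ Λ ^ k * d :=
        dist_iterate_le T Λ hΛ0 hLip k x y
      have h1 : dist ((T.symm)^[k] x) ((T.symm)^[k] y) ^ α ≤ (Λ ^ k * d) ^ α :=
        Real.rpow_le_rpow dist_nonneg hdist hα.le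
      have h2 : (Λ ^ k * d) ^ α = r ^ k * d ^ α := by
        rw [Real.mul_rpow (by positivity) hd0, ← Real.rpow_natCast Λ k,
          ← Real.rpow_natCast r k, hr_def, ← Real.rpow_mul hΛ0.le,
          ← Real.rpow_mul hΛ0.le, mul_comm (k:ℝ) α]
      have hmul := mul_le_mul_of_nonneg_left h1 hH'0
      rw [h2] at hmul
      exact hmul
    have hP : ‖transferCocycle T A k x‖ ≤ C₀ * θ ^ k := hbound k x
    have hQ : ‖transferCocycle T A (m + 1 - 1 - k) ((T.symm)^[k + 1] y)‖
        ≤ C₀ * θ ^ (m - k) := by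
      have : m + 1 - 1 - k = m - k := by omega
      rw [this]; exact hbound _ _
    calc ‖transferCocycle T A k x *
          (A ((T.symm)^[k] x) - A ((T.symm)^[k] y)) *
          transferCocycle T A (m + 1 - 1 - k) ((T.symm)^[k + 1] y)‖
        ≤ ‖transferCocycle T A k x *
            (A ((T.symm)^[k] x) - A ((T.symm)^[k] y))‖ *
          ‖transferCocycle T A (m + 1 - 1 - k) ((T.symm)^[k + 1] y)‖ :=
          norm_mul_le _ _
      _ ≤ (‖transferCocycle T A k x‖ *
            ‖A ((T.symm)^[k] x) - A ((T.symm)^[k] y)‖) *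
          ‖transferCocycle T A (m + 1 - 1 - k) ((T.symm)^[k + 1] y)‖ := by
          gcongr
          exact norm_mul_le _ _
      _ ≤ (C₀ * θ ^ k) * (H' * (r ^ k * d ^ α)) * (C₀ * θ ^ (m - k)) := by
          gcongr <;> positivity
      _ = (C₀ ^ 2 * H' * d ^ α * r ^ k) * (θ ^ k * θ ^ (m - k)) := by ring
      _ = (C₀ ^ 2 * H' * θ ^ m * d ^ α) * r ^ k := by
          have hθk : θ ^ k * θ ^ (m - k) = θ ^ m := by
            rw [← pow_add]
            congr 1
            omega
          rw [← hθk]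
          ring
  calc ‖∑ k ∈ Finset.range (m + 1), transferCocycle T A k x *
          (A ((T.symm)^[k] x) - A ((T.symm)^[k] y)) *
          transferCocycle T A (m + 1 - 1 - k) ((T.symm)^[k + 1] y)‖
      ≤ ∑ k ∈ Finset.range (m + 1), ‖transferCocycle T A k x *
          (A ((T.symm)^[k] x) - A ((T.symm)^[k] y)) *
          transferCocycle T A (m + 1 - 1 - k) ((T.symm)^[k + 1] y)‖ :=
        norm_sum_le _ _
    _ ≤ ∑ k ∈ Finset.range (m + 1), (C₀ ^ 2 * H' * θ ^ m * d ^ α) * r ^ k :=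
        Finset.sum_le_sum hterm
    _ = (C₀ ^ 2 * H' * θ ^ m * d ^ α) * ∑ k ∈ Finset.range (m + 1), r ^ k := by
        rw [Finset.mul_sum]
    _ ≤ (C₀ ^ 2 * H' * θ ^ m * d ^ α) * (r ^ (m + 1) / (r - 1)) := by
        have hsum : ∑ k ∈ Finset.range (m + 1), r ^ k
            = (r ^ (m + 1) - 1) / (r - 1) := geom_sum_eq hr1.ne' (m + 1)
        rw [hsum]
        have h1 : (0:ℝ) < r - 1 := by linarith
        gcongr
        linarith
    _ = K * (θ * r) ^ (m + 1) * d ^ α := by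
        have h1 : r - 1 ≠ 0 := by intro h; linarith [hr1]
        rw [hK_def]
        field_simp
        ring
    _ ≤ (K + 1) * (θ * r) ^ (m + 1) * d ^ α := by
        have hpos : (0:ℝ) ≤ (θ * r) ^ (m + 1) * d ^ α :=
          mul_nonneg (by positivity) hdα
        nlinarith [hpos]
end

section
/- Let (M,d) be a compact metric space, α ∈ (0,1], and let T : M → M be a homeomorphism whose inverse T⁻¹ is Lipschitz with constant Λ > 1. Let h : M → ℂ be α-Hölder, and suppose there are constants C₀ > 0 and θ > 0 such that sup_{x∈M} ∏_{k=0}^{n-1} |h(T^{-k}x)| ≤ C₀·θⁿ for every n ≥ 0. Then there exists C > 0 such that for every n ≥ 1 and every bounded α-Hölder function v : M → ℂ with sup-norm ‖v‖_∞ and Hölder constant |v|_α, the function L_hⁿ v satisfies ‖L_hⁿ v‖_∞ ≤ C₀·θⁿ·‖v‖_∞ and is α-Hölder with constant at most C·(θΛ^α)ⁿ·(‖v‖_∞ + |v|_α). -/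
open Finset

lemma prod_sub_prod_telescope (a b : ℕ → ℂ) (n : ℕ) :
    ∏ k ∈ range n, a k - ∏ k ∈ range n, b k
      = ∑ j ∈ range n, (∏ k ∈ range j, a k) * (a j - b j) * ∏ k ∈ Finset.Ico (j+1) n, b k := by
  induction n with
  | zero => simp
  | succ n ih =>
      rw [Finset.sum_range_succ, prod_range_succ, prod_range_succ]
      have hstep : ∀ j ∈ range n,
          (∏ k ∈ range j, a k) * (a j - b j) * ∏ k ∈ Finset.Ico (j+1) (n+1), b k
            = ((∏ k ∈ range j, a k) * (a j - b j) * ∏ k ∈ Finset.Ico (j+1) n, b k) * b n := by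
        intro j hj
        rw [Finset.prod_Ico_succ_top (Nat.succ_le_of_lt (mem_range.mp hj))]
        ring
      rw [Finset.sum_congr rfl hstep, ← Finset.sum_mul, ← ih]
      simp [Finset.Ico_self]
      ring

/-- Norm estimates for the iterated transfer operator
`(L_hⁿ v)(x) = (∏_{k<n} h(T^{-k}x)) · v(T^{-n}x)` on `α`-Hölder functions:
`‖L_hⁿ v‖_∞ ≤ C₀ θⁿ ‖v‖_∞` and `L_hⁿ v` is `α`-Hölder with constant at most
`C (θ Λ^α)ⁿ (‖v‖_∞ + |v|_α)`. -/
theorem transferOperator_holder_norm_estimates {M : Type*} [MetricSpace M]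
    [CompactSpace M] (α : ℝ) (hα : 0 < α) (hα1 : α ≤ 1)
    (T : M ≃ₜ M) (Λ : ℝ) (hΛ : 1 < Λ)
    (hLip : ∀ x y : M, dist (T.symm x) (T.symm y) ≤ Λ * dist x y)
    (h : M → ℂ) (H : ℝ)
    (hHold : ∀ x y : M, ‖h x - h y‖ ≤ H * dist x y ^ α)
    (C₀ θ : ℝ) (hC₀ : 0 < C₀) (hθ : 0 < θ)
    (hbound : ∀ (n : ℕ) (x : M),
      ∏ k ∈ Finset.range n, ‖h ((T.symm)^[k] x)‖ ≤ C₀ * θ ^ n) :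
    ∃ C > 0, ∀ n : ℕ, 1 ≤ n → ∀ (v : M → ℂ) (Mv Kv : ℝ),
      (∀ x : M, ‖v x‖ ≤ Mv) →
      (∀ x y : M, ‖v x - v y‖ ≤ Kv * dist x y ^ α) →
      (∀ x : M,
        ‖(∏ k ∈ Finset.range n, h ((T.symm)^[k] x)) * v ((T.symm)^[n] x)‖ ≤
          C₀ * θ ^ n * Mv) ∧
      (∀ x y : M,
        ‖(∏ k ∈ Finset.range n, h ((T.symm)^[k] x)) * v ((T.symm)^[n] x) -
            (∏ k ∈ Finset.range n, h ((T.symm)^[k] y)) * v ((T.symm)^[n] y)‖ ≤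
          C * (θ * Λ ^ α) ^ n * (Mv + Kv) * dist x y ^ α) := by
  have hΛ0 : (0:ℝ) < Λ := lt_trans one_pos hΛ
  have hq1 : 1 < Λ ^ α := Real.one_lt_rpow_iff_of_pos hΛ0 |>.mpr (Or.inl ⟨hΛ, hα⟩)
  have hq0 : (0:ℝ) < Λ ^ α := lt_trans one_pos hq1
  set H' : ℝ := max H 0 with hH'def
  have hH'0 : 0 ≤ H' := le_max_right _ _
  -- iterated Lipschitz bound
  have hiter : ∀ (j : ℕ) (x y : M),
      dist ((T.symm)^[j] x) ((T.symm)^[j] y) ≤ Λ ^ j * dist x y := by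
    intro j
    induction j with
    | zero => intro x y; simp
    | succ j ih =>
        intro x y
        rw [Function.iterate_succ_apply', Function.iterate_succ_apply']
        calc dist (T.symm ((T.symm)^[j] x)) (T.symm ((T.symm)^[j] y))
            ≤ Λ * dist ((T.symm)^[j] x) ((T.symm)^[j] y) := hLip _ _
          _ ≤ Λ * (Λ ^ j * dist x y) := mul_le_mul_of_nonneg_left (ih x y) hΛ0.le
          _ = Λ ^ (j+1) * dist x y := by ring
  have hpowq : ∀ j : ℕ, ((Λ:ℝ) ^ j) ^ α = (Λ ^ α) ^ j := by
    intro j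
    rw [← Real.rpow_natCast Λ j, ← Real.rpow_mul hΛ0.le, mul_comm (j:ℝ) α,
      Real.rpow_mul hΛ0.le, Real.rpow_natCast]
  have hpow : ∀ (j : ℕ) (x y : M),
      dist ((T.symm)^[j] x) ((T.symm)^[j] y) ^ α ≤ (Λ ^ α) ^ j * dist x y ^ α := by
    intro j x y
    calc dist ((T.symm)^[j] x) ((T.symm)^[j] y) ^ α
        ≤ (Λ ^ j * dist x y) ^ α := Real.rpow_le_rpow dist_nonneg (hiter j x y) hα.le
      _ = (Λ ^ j) ^ α * dist x y ^ α := Real.mul_rpow (pow_nonneg hΛ0.le j) dist_nonneg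
      _ = (Λ ^ α) ^ j * dist x y ^ α := by rw [hpowq]
  -- tail product bound
  have htail : ∀ (m N : ℕ) (y : M),
      ∏ k ∈ Finset.Ico m N, ‖h ((T.symm)^[k] y)‖ ≤ C₀ * θ ^ (N - m) := by
    intro m N y
    calc ∏ k ∈ Finset.Ico m N, ‖h ((T.symm)^[k] y)‖
        = ∏ k ∈ range (N - m), ‖h ((T.symm)^[m + k] y)‖ := by
          rw [Finset.prod_Ico_eq_prod_range]
      _ = ∏ k ∈ range (N - m), ‖h ((T.symm)^[k] ((T.symm)^[m] y))‖ := by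
          refine Finset.prod_congr rfl fun k _ => ?_
          rw [add_comm, Function.iterate_add_apply]
      _ ≤ C₀ * θ ^ (N - m) := hbound _ _
  have hden : (0:ℝ) < θ * (Λ ^ α - 1) := mul_pos hθ (by linarith)
  refine ⟨C₀ + C₀ ^ 2 * H' / (θ * (Λ ^ α - 1)),
    add_pos_of_pos_of_nonneg hC₀ (div_nonneg (by positivity) hden.le), ?_⟩
  intro n hn v Mv Kv hBnd hHoldV
  have habsprod : ∀ (m : ℕ) (z : M),
      ‖∏ k ∈ range m, h ((T.symm)^[k] z)‖ ≤ C₀ * θ ^ m := by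
    intro m z
    rw [norm_prod]
    exact hbound m z
  constructor
  · intro x
    rw [norm_mul]
    have hMv0 : 0 ≤ Mv := le_trans (norm_nonneg _) (hBnd x)
    exact mul_le_mul (habsprod n x) (hBnd _) (norm_nonneg _) (by positivity)
  · intro x y
    rcases eq_or_ne x y with rfl | hxy
    · simp [Real.zero_rpow hα.ne']
    have hd0 : 0 < dist x y := dist_pos.mpr hxy
    have hdα : 0 < dist x y ^ α := Real.rpow_pos_of_pos hd0 α
    have hMv0 : 0 ≤ Mv := le_trans (norm_nonneg _) (hBnd x)
    have hKv0 : 0 ≤ Kv := by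
      have h1 : 0 ≤ Kv * dist x y ^ α :=
        le_trans (norm_nonneg _) (hHoldV x y)
      nlinarith
    obtain ⟨m, rfl⟩ : ∃ m, n = m + 1 := ⟨n - 1, by omega⟩
    set gx := ∏ k ∈ range (m+1), h ((T.symm)^[k] x) with hgx
    set gy := ∏ k ∈ range (m+1), h ((T.symm)^[k] y) with hgy
    -- bound on gx - gy
    have B1 : ‖gx - gy‖ ≤
        C₀ ^ 2 * H' * (θ * Λ ^ α) ^ (m+1) / (θ * (Λ ^ α - 1)) * dist x y ^ α := by
      rw [hgx, hgy, prod_sub_prod_telescope]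
      have hterm : ∀ j ∈ range (m+1),
          ‖(∏ k ∈ range j, h ((T.symm)^[k] x)) *
              (h ((T.symm)^[j] x) - h ((T.symm)^[j] y)) *
              ∏ k ∈ Finset.Ico (j+1) (m+1), h ((T.symm)^[k] y)‖ ≤
            (C₀ ^ 2 * H' * dist x y ^ α * θ ^ m) * (Λ ^ α) ^ j := by
        intro j hj
        rw [norm_mul, norm_mul]
        have hb2 : ‖h ((T.symm)^[j] x) - h ((T.symm)^[j] y)‖ ≤
            H' * ((Λ ^ α) ^ j * dist x y ^ α) := by
          calc ‖h ((T.symm)^[j] x) - h ((T.symm)^[j] y)‖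
              ≤ H * dist ((T.symm)^[j] x) ((T.symm)^[j] y) ^ α := hHold _ _
            _ ≤ H' * dist ((T.symm)^[j] x) ((T.symm)^[j] y) ^ α :=
                mul_le_mul_of_nonneg_right (le_max_left _ _)
                  (Real.rpow_nonneg dist_nonneg α)
            _ ≤ H' * ((Λ ^ α) ^ j * dist x y ^ α) :=
                mul_le_mul_of_nonneg_left (hpow j x y) hH'0
        have hb3 : ‖∏ k ∈ Finset.Ico (j+1) (m+1), h ((T.symm)^[k] y)‖ ≤
            C₀ * θ ^ (m - j) := by
          have := htail (j+1) (m+1) y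
          rw [norm_prod]
          simpa [Nat.succ_sub_succ] using this
        have hle : ‖∏ k ∈ range j, h ((T.symm)^[k] x)‖ *
              ‖h ((T.symm)^[j] x) - h ((T.symm)^[j] y)‖ *
              ‖∏ k ∈ Finset.Ico (j+1) (m+1), h ((T.symm)^[k] y)‖ ≤
            (C₀ * θ ^ j) * (H' * ((Λ ^ α) ^ j * dist x y ^ α)) * (C₀ * θ ^ (m - j)) := by
          have h1 := habsprod j x
          refine mul_le_mul (mul_le_mul h1 hb2 (norm_nonneg _) (by positivity))
            hb3 (norm_nonneg _) (by positivity)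
        refine le_trans hle (le_of_eq ?_)
        have hjm : j ≤ m := Nat.lt_succ_iff.mp (mem_range.mp hj)
        have hθjm : θ ^ j * θ ^ (m - j) = θ ^ m := by
          rw [← pow_add]; congr 1; omega
        rw [← hθjm]; ring
      calc ‖∑ j ∈ range (m+1), (∏ k ∈ range j, h ((T.symm)^[k] x)) *
              (h ((T.symm)^[j] x) - h ((T.symm)^[j] y)) *
              ∏ k ∈ Finset.Ico (j+1) (m+1), h ((T.symm)^[k] y)‖
          ≤ ∑ j ∈ range (m+1), ‖(∏ k ∈ range j, h ((T.symm)^[k] x)) *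
              (h ((T.symm)^[j] x) - h ((T.symm)^[j] y)) *
              ∏ k ∈ Finset.Ico (j+1) (m+1), h ((T.symm)^[k] y)‖ :=
            norm_sum_le _ _
        _ ≤ ∑ j ∈ range (m+1), (C₀ ^ 2 * H' * dist x y ^ α * θ ^ m) * (Λ ^ α) ^ j :=
            Finset.sum_le_sum hterm
        _ = (C₀ ^ 2 * H' * dist x y ^ α * θ ^ m) * ∑ j ∈ range (m+1), (Λ ^ α) ^ j := by
            rw [Finset.mul_sum]
        _ ≤ (C₀ ^ 2 * H' * dist x y ^ α * θ ^ m) * ((Λ ^ α) ^ (m+1) / (Λ ^ α - 1)) := by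
            refine mul_le_mul_of_nonneg_left ?_ (by positivity)
            rw [le_div_iff₀ (by linarith)]
            have := geom_sum_mul (Λ ^ α) (m+1)
            have hpos : (0:ℝ) < (Λ ^ α) ^ (m+1) := by positivity
            linarith
        _ = C₀ ^ 2 * H' * (θ * Λ ^ α) ^ (m+1) / (θ * (Λ ^ α - 1)) * dist x y ^ α := by
            rw [mul_pow]
            have hne : Λ ^ α - 1 ≠ 0 := by linarith
            field_simp [hθ.ne']
            ring
    -- bound on the v-difference term
    have B2 : ‖v ((T.symm)^[m+1] x) - v ((T.symm)^[m+1] y)‖ ≤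
        Kv * ((Λ ^ α) ^ (m+1) * dist x y ^ α) := by
      calc ‖v ((T.symm)^[m+1] x) - v ((T.symm)^[m+1] y)‖
          ≤ Kv * dist ((T.symm)^[m+1] x) ((T.symm)^[m+1] y) ^ α := hHoldV _ _
        _ ≤ Kv * ((Λ ^ α) ^ (m+1) * dist x y ^ α) :=
            mul_le_mul_of_nonneg_left (hpow (m+1) x y) hKv0
    have key : gx * v ((T.symm)^[m+1] x) - gy * v ((T.symm)^[m+1] y)
        = (gx - gy) * v ((T.symm)^[m+1] x) + gy * (v ((T.symm)^[m+1] x) - v ((T.symm)^[m+1] y)) := by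
      ring
    rw [key]
    have hfin : ‖(gx - gy) * v ((T.symm)^[m+1] x)‖ +
        ‖gy * (v ((T.symm)^[m+1] x) - v ((T.symm)^[m+1] y))‖ ≤
        (C₀ + C₀ ^ 2 * H' / (θ * (Λ ^ α - 1))) * (θ * Λ ^ α) ^ (m+1) * (Mv + Kv) *
          dist x y ^ α := by
      rw [norm_mul, norm_mul]
      have t1 : ‖(gx - gy)‖ * ‖v ((T.symm)^[m+1] x)‖ ≤
          (C₀ ^ 2 * H' * (θ * Λ ^ α) ^ (m+1) / (θ * (Λ ^ α - 1)) * dist x y ^ α) * Mv :=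
        mul_le_mul B1 (hBnd _) (norm_nonneg _)
          (mul_nonneg (div_nonneg (by positivity) hden.le) hdα.le)
      have t2 : ‖gy‖ * ‖v ((T.symm)^[m+1] x) - v ((T.symm)^[m+1] y)‖ ≤
          (C₀ * θ ^ (m+1)) * (Kv * ((Λ ^ α) ^ (m+1) * dist x y ^ α)) :=
        mul_le_mul (habsprod _ _) B2 (norm_nonneg _) (by positivity)
      have hA : 0 ≤ C₀ ^ 2 * H' / (θ * (Λ ^ α - 1)) := div_nonneg (by positivity) hden.le
      have hsplit : (C₀ ^ 2 * H' * (θ * Λ ^ α) ^ (m+1) / (θ * (Λ ^ α - 1)) * dist x y ^ α) * Mv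
            + (C₀ * θ ^ (m+1)) * (Kv * ((Λ ^ α) ^ (m+1) * dist x y ^ α)) ≤
          (C₀ + C₀ ^ 2 * H' / (θ * (Λ ^ α - 1))) * (θ * Λ ^ α) ^ (m+1) * (Mv + Kv) *
            dist x y ^ α := by
        have e1 : (C₀ ^ 2 * H' * (θ * Λ ^ α) ^ (m+1) / (θ * (Λ ^ α - 1)) * dist x y ^ α) * Mv
            = (C₀ ^ 2 * H' / (θ * (Λ ^ α - 1)) * Mv) * ((θ * Λ ^ α) ^ (m+1) * dist x y ^ α) := by
          ring
        have e2 : (C₀ * θ ^ (m+1)) * (Kv * ((Λ ^ α) ^ (m+1) * dist x y ^ α))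
            = (C₀ * Kv) * ((θ * Λ ^ α) ^ (m+1) * dist x y ^ α) := by
          rw [mul_pow]; ring
        have e3 : (C₀ + C₀ ^ 2 * H' / (θ * (Λ ^ α - 1))) * (θ * Λ ^ α) ^ (m+1) * (Mv + Kv) *
            dist x y ^ α = ((C₀ + C₀ ^ 2 * H' / (θ * (Λ ^ α - 1))) * (Mv + Kv)) *
              ((θ * Λ ^ α) ^ (m+1) * dist x y ^ α) := by
          ring
        rw [e1, e2, e3]
        have hP : (0:ℝ) ≤ (θ * Λ ^ α) ^ (m+1) * dist x y ^ α :=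
          mul_nonneg (by positivity) hdα.le
        rw [← add_mul]
        refine mul_le_mul_of_nonneg_right ?_ hP
        nlinarith
      linarith
    exact le_trans (norm_add_le _ _) hfin
end

section
/- Let (M,d) be a compact metric space, α ∈ (0,1], and let T : M → M be a homeomorphism whose inverse T⁻¹ is Lipschitz with constant Λ > 1. Let h : M → ℂ be α-Hölder, and suppose there are constants C₀ > 0 and 0 < θ < 1 with θ·Λ^α < 1 such that sup_{x∈M} ∏_{k=0}^{n-1} |h(T^{-k}x)| ≤ C₀·θⁿ for every n ≥ 0. Then for every bounded α-Hölder function w : M → ℂ, the partial sums v_N := Σ_{n=0}^{N−1} L_hⁿ w converge uniformly on M to a function v; this v is bounded and α-Hölder; v is the unique continuous function on M satisfying v(x) = h(x)·v(T⁻¹x) + w(x) for all x ∈ M; and ‖v − v_N‖_∞ ≤ C₀·θᴺ·(1−θ)⁻¹·‖w‖_∞ for every N. -/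
open Finset Filter

/-- Neumann series solution of `(I - L_h) v = w` for the transfer operator
`(L_h u)(x) = h(x) u(T⁻¹x)`: the partial sums `v_N = Σ_{n<N} L_hⁿ w` converge
uniformly to a bounded `α`-Hölder function `v`, which is the unique continuous solution
of `v(x) = h(x) v(T⁻¹x) + w(x)`, with `‖v − v_N‖_∞ ≤ C₀ θᴺ (1−θ)⁻¹ ‖w‖_∞`. -/
theorem transferOperator_neumann_series {M : Type*} [MetricSpace M] [CompactSpace M]
    (α : ℝ) (hα : 0 < α) (hα1 : α ≤ 1)
    (T : M ≃ₜ M) (Λ : ℝ) (hΛ : 1 < Λ)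
    (hLip : ∀ x y : M, dist (T.symm x) (T.symm y) ≤ Λ * dist x y)
    (h : M → ℂ) (H : ℝ)
    (hHold : ∀ x y : M, ‖h x - h y‖ ≤ H * dist x y ^ α)
    (C₀ θ : ℝ) (hC₀ : 0 < C₀) (hθ : 0 < θ) (hθ1 : θ < 1) (hθΛ : θ * Λ ^ α < 1)
    (hbound : ∀ (n : ℕ) (x : M),
      ∏ k ∈ Finset.range n, ‖h ((T.symm)^[k] x)‖ ≤ C₀ * θ ^ n)
    (w : M → ℂ) (Mw Kw : ℝ)
    (hw : ∀ x : M, ‖w x‖ ≤ Mw)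
    (hwHold : ∀ x y : M, ‖w x - w y‖ ≤ Kw * dist x y ^ α) :
    ∃ v : M → ℂ,
      TendstoUniformly
        (fun N x => ∑ n ∈ Finset.range N,
          (∏ k ∈ Finset.range n, h ((T.symm)^[k] x)) * w ((T.symm)^[n] x))
        v Filter.atTop ∧
      (∃ Mv : ℝ, ∀ x : M, ‖v x‖ ≤ Mv) ∧
      (∃ Kv : ℝ, ∀ x y : M, ‖v x - v y‖ ≤ Kv * dist x y ^ α) ∧
      Continuous v ∧
      (∀ x : M, v x = h x * v (T.symm x) + w x) ∧
      (∀ v' : M → ℂ, Continuous v' → (∀ x : M, v' x = h x * v' (T.symm x) + w x) →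
        v' = v) ∧
      (∀ (N : ℕ) (x : M),
        ‖v x - ∑ n ∈ Finset.range N,
            (∏ k ∈ Finset.range n, h ((T.symm)^[k] x)) * w ((T.symm)^[n] x)‖ ≤
          C₀ * θ ^ N * (1 - θ)⁻¹ * Mw) := by
  rcases isEmpty_or_nonempty M with hM | hM
  · refine ⟨fun _ => 0, ?_, ⟨0, fun x => (hM.false x).elim⟩, ⟨0, fun x => (hM.false x).elim⟩,
      continuous_const, fun x => (hM.false x).elim,
      fun v' _ _ => funext fun x => (hM.false x).elim, fun N x => (hM.false x).elim⟩
    rw [Metric.tendstoUniformly_iff]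
    intro ε hε
    filter_upwards with N x
    exact (hM.false x).elim
  obtain ⟨x₀⟩ := id hM
  have habs : ∀ z : ℂ, ‖z‖ = ‖z‖ := fun z => rfl
  have hMw0 : 0 ≤ Mw := le_trans (norm_nonneg _) (hw x₀)
  set H' := max H 0 with hH'def
  have hH'0 : 0 ≤ H' := le_max_right _ _
  have hHold' : ∀ x y : M, ‖h x - h y‖ ≤ H' * dist x y ^ α := fun x y =>
    (hHold x y).trans
      (mul_le_mul_of_nonneg_right (le_max_left _ _) (Real.rpow_nonneg dist_nonneg _))
  set Kw' := max Kw 0 with hKw'def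
  have hKw'0 : 0 ≤ Kw' := le_max_right _ _
  have hwHold' : ∀ x y : M, ‖w x - w y‖ ≤ Kw' * dist x y ^ α := fun x y =>
    (hwHold x y).trans
      (mul_le_mul_of_nonneg_right (le_max_left _ _) (Real.rpow_nonneg dist_nonneg _))
  have hΛ0 : 0 < Λ := lt_trans one_pos hΛ
  have hΛα0 : 0 < Λ ^ α := Real.rpow_pos_of_pos hΛ0 α
  have hΛα1 : 1 ≤ Λ ^ α := Real.one_le_rpow hΛ.le hα.le
  set r := θ * Λ ^ α with hrdef
  have hr0 : 0 < r := mul_pos hθ hΛα0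
  have hθr : θ ≤ r := by nlinarith
  have hr1 : r < 1 := hθΛ
  have habsP : ∀ (n : ℕ) (x : M),
      ‖∏ k ∈ Finset.range n, h ((T.symm)^[k] x)‖ ≤ C₀ * θ ^ n := by
    intro n x
    rw [norm_prod]
    exact hbound n x
  set g : ℕ → M → ℂ :=
    fun n x => (∏ k ∈ Finset.range n, h ((T.symm)^[k] x)) * w ((T.symm)^[n] x) with hgdef
  have hg : ∀ (n : ℕ) (x : M), ‖g n x‖ ≤ C₀ * θ ^ n * Mw := by
    intro n x
    rw [hgdef]
    simp only
    rw [norm_mul]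
    exact mul_le_mul (habsP n x) (hw _) (norm_nonneg _) (by positivity)
  have hsummg : ∀ x : M, Summable fun n => g n x := by
    intro x
    apply Summable.of_norm
    have hbnd : Summable fun n : ℕ => C₀ * θ ^ n * Mw :=
      ((summable_geometric_of_lt_one hθ.le hθ1).mul_left C₀).mul_right Mw
    refine Summable.of_nonneg_of_le (fun n => norm_nonneg _) (fun n => ?_) hbnd
    rw [← habs]; exact hg n x
  set v : M → ℂ := fun x => ∑' n, g n x with hvdef
  -- distance estimate for iterates
  have hdistIter : ∀ (n : ℕ) (x y : M),
      dist ((T.symm)^[n] x) ((T.symm)^[n] y) ≤ Λ ^ n * dist x y := by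
    intro n
    induction n with
    | zero => intro x y; simp
    | succ n ih =>
      intro x y
      rw [Function.iterate_succ_apply', Function.iterate_succ_apply']
      calc dist (T.symm ((T.symm)^[n] x)) (T.symm ((T.symm)^[n] y))
          ≤ Λ * dist ((T.symm)^[n] x) ((T.symm)^[n] y) := hLip _ _
        _ ≤ Λ * (Λ ^ n * dist x y) := mul_le_mul_of_nonneg_left (ih x y) hΛ0.le
        _ = Λ ^ (n + 1) * dist x y := by ring
  have hdistRpow : ∀ (n : ℕ) (x y : M),
      dist ((T.symm)^[n] x) ((T.symm)^[n] y) ^ α ≤ (Λ ^ α) ^ n * dist x y ^ α := by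
    intro n x y
    calc dist ((T.symm)^[n] x) ((T.symm)^[n] y) ^ α
        ≤ (Λ ^ n * dist x y) ^ α :=
          Real.rpow_le_rpow dist_nonneg (hdistIter n x y) hα.le
      _ = (Λ ^ n) ^ α * dist x y ^ α :=
          Real.mul_rpow (pow_nonneg hΛ0.le n) dist_nonneg
      _ = (Λ ^ α) ^ n * dist x y ^ α := by
          rw [← Real.rpow_natCast Λ n, ← Real.rpow_natCast (Λ ^ α) n,
            ← Real.rpow_mul hΛ0.le, ← Real.rpow_mul hΛ0.le, mul_comm α (n:ℝ)]
  -- tail estimate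
  have tail : ∀ (N : ℕ) (x : M),
      ‖v x - ∑ n ∈ Finset.range N, g n x‖ ≤ C₀ * θ ^ N * (1 - θ)⁻¹ * Mw := by
    intro N x
    have hb : Summable fun n : ℕ => C₀ * θ ^ (n + N) * Mw := by
      refine ((summable_geometric_of_lt_one hθ.le hθ1).mul_left
        (C₀ * θ ^ N * Mw)).congr fun n => ?_
      rw [pow_add]; ring
    have h1 : v x - ∑ n ∈ Finset.range N, g n x = ∑' n, g (n + N) x := by
      have h2 := Summable.sum_add_tsum_nat_add (f := fun n => g n x) N (hsummg x)
      rw [hvdef]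
      simp only
      rw [← h2]
      ring
    have hn : Summable fun n => ‖g (n + N) x‖ :=
      Summable.of_nonneg_of_le (fun _ => norm_nonneg _)
        (fun n => by rw [← habs]; exact hg _ x) hb
    rw [h1, habs]
    calc ‖∑' n, g (n + N) x‖ ≤ ∑' n, ‖g (n + N) x‖ := norm_tsum_le_tsum_norm hn
      _ ≤ ∑' n, C₀ * θ ^ (n + N) * Mw := by
          refine Summable.tsum_le_tsum (fun n => ?_) hn hb
          rw [← habs]; exact hg _ x
      _ = ∑' n : ℕ, (C₀ * θ ^ N * Mw) * θ ^ n := by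
          refine tsum_congr fun n => ?_
          rw [pow_add]; ring
      _ = (C₀ * θ ^ N * Mw) * ∑' n : ℕ, θ ^ n := tsum_mul_left
      _ = C₀ * θ ^ N * (1 - θ)⁻¹ * Mw := by
          rw [tsum_geometric_of_lt_one hθ.le hθ1]; ring
  -- uniform convergence
  have hTU : TendstoUniformly (fun N x => ∑ n ∈ Finset.range N, g n x) v atTop := by
    rw [Metric.tendstoUniformly_iff]
    intro ε hε
    have h0 : Tendsto (fun N : ℕ => C₀ * θ ^ N * (1 - θ)⁻¹ * Mw) atTop (nhds 0) := by
      have h1 := (((tendsto_pow_atTop_nhds_zero_of_lt_one hθ.le hθ1).const_mul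
        C₀).mul_const ((1 - θ)⁻¹)).mul_const Mw
      simpa using h1
    filter_upwards [h0.eventually (gt_mem_nhds hε)] with N hN x
    rw [dist_eq_norm, ← habs]
    exact lt_of_le_of_lt (tail N x) hN
  -- continuity helpers
  have contOf : ∀ (f : M → ℂ) (K : ℝ),
      (∀ x y : M, ‖f x - f y‖ ≤ K * dist x y ^ α) → Continuous f := by
    intro f K hf
    rw [continuous_iff_continuousAt]
    intro b
    rw [ContinuousAt, tendsto_iff_dist_tendsto_zero]
    have hd : Tendsto (fun x : M => dist x b) (nhds b) (nhds 0) := by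
      have := (continuous_id.dist (continuous_const (y := b))).tendsto b
      simpa using this
    have hrg : Tendsto (fun x : M => K * dist x b ^ α) (nhds b) (nhds 0) := by
      have h2 : Tendsto (fun t : ℝ => t ^ α) (nhds 0) (nhds 0) := by
        have := Real.continuousAt_rpow_const 0 α (Or.inr hα.le)
        simpa [ContinuousAt, Real.zero_rpow hα.ne'] using this
      have := (h2.comp hd).const_mul K
      simpa using this
    refine squeeze_zero (fun x => dist_nonneg) (fun x => ?_) hrg
    rw [dist_eq_norm, ← habs]
    exact hf x b
  have hhc : Continuous h := contOf h H' hHold'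
  have hwc : Continuous w := contOf w Kw' hwHold'
  have hgc : ∀ n : ℕ, Continuous (g n) := by
    intro n
    rw [hgdef]
    exact Continuous.mul
      (continuous_finset_prod _ fun k _ => hhc.comp (T.symm.continuous.iterate k))
      (hwc.comp (T.symm.continuous.iterate n))
  have hvc : Continuous v :=
    hTU.continuous (Eventually.of_forall fun N => continuous_finset_sum _ fun n _ => hgc n).frequently
  -- fixed point equation
  have heq : ∀ x : M, v x = h x * v (T.symm x) + w x := by
    intro x
    have hg0 : g 0 x = w x := by rw [hgdef]; simp
    have hgs : ∀ n : ℕ, g (n + 1) x = h x * g n (T.symm x) := by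
      intro n
      rw [hgdef]
      simp only
      rw [Finset.prod_range_succ']
      simp only [Function.iterate_succ_apply, Function.iterate_zero_apply]
      ring
    rw [hvdef]
    simp only
    rw [Summable.tsum_eq_zero_add (hsummg x), hg0, tsum_congr hgs, tsum_mul_left]
    ring
  -- Hölder estimate on products
  have claim_struct : ∀ (n : ℕ) (x y : M),
      ‖(∏ k ∈ Finset.range n, h ((T.symm)^[k] x))
        - ∏ k ∈ Finset.range n, h ((T.symm)^[k] y)‖ ≤
      ∑ j ∈ Finset.range n,
        (∏ k ∈ Finset.range j, ‖h ((T.symm)^[k] y)‖) *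
          ‖h ((T.symm)^[j] x) - h ((T.symm)^[j] y)‖ * (C₀ * θ ^ (n - (j + 1))) := by
    intro n
    induction n with
    | zero => intro x y; simp
    | succ n ih =>
      intro x y
      have hx : (∏ k ∈ Finset.range (n + 1), h ((T.symm)^[k] x)) =
          (∏ k ∈ Finset.range n, h ((T.symm)^[k] (T.symm x))) * h x := by
        rw [Finset.prod_range_succ']
        simp only [Function.iterate_succ_apply, Function.iterate_zero_apply]
      have hy : (∏ k ∈ Finset.range (n + 1), h ((T.symm)^[k] y)) =
          (∏ k ∈ Finset.range n, h ((T.symm)^[k] (T.symm y))) * h y := by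
        rw [Finset.prod_range_succ']
        simp only [Function.iterate_succ_apply, Function.iterate_zero_apply]
      rw [hx, hy]
      have hsplit : (∏ k ∈ Finset.range n, h ((T.symm)^[k] (T.symm x))) * h x
          - (∏ k ∈ Finset.range n, h ((T.symm)^[k] (T.symm y))) * h y
          = ((∏ k ∈ Finset.range n, h ((T.symm)^[k] (T.symm x)))
              - ∏ k ∈ Finset.range n, h ((T.symm)^[k] (T.symm y))) * h y
            + (∏ k ∈ Finset.range n, h ((T.symm)^[k] (T.symm x))) * (h x - h y) := by ring
      rw [hsplit]
      refine le_trans (norm_add_le _ _) ?_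
      rw [norm_mul, norm_mul]
      rw [Finset.sum_range_succ']
      have hterm0 : ‖∏ k ∈ Finset.range n, h ((T.symm)^[k] (T.symm x))‖ *
          ‖h x - h y‖ ≤
          (∏ k ∈ Finset.range 0, ‖h ((T.symm)^[k] y)‖) *
            ‖h ((T.symm)^[0] x) - h ((T.symm)^[0] y)‖ *
            (C₀ * θ ^ (n + 1 - (0 + 1))) := by
        simp only [Finset.range_zero, Finset.prod_empty, Function.iterate_zero_apply, one_mul]
        rw [mul_comm (‖h x - h y‖)]
        have : n + 1 - (0 + 1) = n := by omega
        rw [this]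
        exact mul_le_mul_of_nonneg_right (habsP n (T.symm x)) (norm_nonneg _)
      have htermS : ‖(∏ k ∈ Finset.range n, h ((T.symm)^[k] (T.symm x)))
            - ∏ k ∈ Finset.range n, h ((T.symm)^[k] (T.symm y))‖ * ‖h y‖ ≤
          ∑ j ∈ Finset.range n,
            (∏ k ∈ Finset.range (j + 1), ‖h ((T.symm)^[k] y)‖) *
              ‖h ((T.symm)^[j + 1] x) - h ((T.symm)^[j + 1] y)‖ *
              (C₀ * θ ^ (n + 1 - (j + 1 + 1))) := by
        have hsum_eq : ∀ j ∈ Finset.range n,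
            (∏ k ∈ Finset.range (j + 1), ‖h ((T.symm)^[k] y)‖) *
              ‖h ((T.symm)^[j + 1] x) - h ((T.symm)^[j + 1] y)‖ *
              (C₀ * θ ^ (n + 1 - (j + 1 + 1))) =
            ‖h y‖ *
              ((∏ k ∈ Finset.range j, ‖h ((T.symm)^[k] (T.symm y))‖) *
                ‖h ((T.symm)^[j] (T.symm x)) - h ((T.symm)^[j] (T.symm y))‖ *
                (C₀ * θ ^ (n - (j + 1)))) := by
          intro j hj
          rw [Finset.prod_range_succ']
          simp only [Function.iterate_succ_apply, Function.iterate_zero_apply]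
          have : n + 1 - (j + 1 + 1) = n - (j + 1) := by omega
          rw [this]
          ring
        rw [Finset.sum_congr rfl hsum_eq, ← Finset.mul_sum]
        rw [mul_comm]
        exact mul_le_mul_of_nonneg_left (ih (T.symm x) (T.symm y)) (norm_nonneg _)
      exact add_le_add htermS hterm0
  have claim_P : ∀ (n : ℕ) (x y : M),
      ‖(∏ k ∈ Finset.range n, h ((T.symm)^[k] x))
        - ∏ k ∈ Finset.range n, h ((T.symm)^[k] y)‖ ≤
      C₀ ^ 2 * H' * n * r ^ (n - 1) * dist x y ^ α := by
    intro n x y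
    refine (claim_struct n x y).trans ?_
    have hterm : ∀ j ∈ Finset.range n,
        (∏ k ∈ Finset.range j, ‖h ((T.symm)^[k] y)‖) *
          ‖h ((T.symm)^[j] x) - h ((T.symm)^[j] y)‖ * (C₀ * θ ^ (n - (j + 1))) ≤
        C₀ ^ 2 * H' * r ^ (n - 1) * dist x y ^ α := by
      intro j hj
      rw [Finset.mem_range] at hj
      have h1 : (∏ k ∈ Finset.range j, ‖h ((T.symm)^[k] y)‖) ≤ C₀ * θ ^ j :=
        hbound j y
      have h2 : ‖h ((T.symm)^[j] x) - h ((T.symm)^[j] y)‖ ≤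
          H' * ((Λ ^ α) ^ j * dist x y ^ α) :=
        (hHold' _ _).trans (mul_le_mul_of_nonneg_left (hdistRpow j x y) hH'0)
      have e2 : r ^ j * θ ^ (n - (j + 1)) ≤ r ^ (n - 1) := by
        calc r ^ j * θ ^ (n - (j + 1)) ≤ r ^ j * r ^ (n - (j + 1)) :=
              mul_le_mul_of_nonneg_left (pow_le_pow_left₀ hθ.le hθr _) (pow_nonneg hr0.le j)
          _ = r ^ (j + (n - (j + 1))) := (pow_add r j _).symm
          _ = r ^ (n - 1) := by congr 1; omega
      calc (∏ k ∈ Finset.range j, ‖h ((T.symm)^[k] y)‖) *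
            ‖h ((T.symm)^[j] x) - h ((T.symm)^[j] y)‖ * (C₀ * θ ^ (n - (j + 1)))
          ≤ (C₀ * θ ^ j) * (H' * ((Λ ^ α) ^ j * dist x y ^ α)) * (C₀ * θ ^ (n - (j + 1))) := by
            have hp1 : (0:ℝ) ≤ ∏ k ∈ Finset.range j, ‖h ((T.symm)^[k] y)‖ :=
              Finset.prod_nonneg fun k _ => norm_nonneg _
            have hp2 : (0:ℝ) ≤ ‖h ((T.symm)^[j] x) - h ((T.symm)^[j] y)‖ :=
              norm_nonneg _
            refine mul_le_mul (mul_le_mul h1 h2 hp2 (by positivity)) le_rfl (by positivity) ?_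
            positivity
        _ = (C₀ ^ 2 * H' * dist x y ^ α) * (r ^ j * θ ^ (n - (j + 1))) := by
            rw [hrdef, mul_pow]; ring
        _ ≤ (C₀ ^ 2 * H' * dist x y ^ α) * r ^ (n - 1) := by
            refine mul_le_mul_of_nonneg_left e2 ?_
            have : (0:ℝ) ≤ dist x y ^ α := Real.rpow_nonneg dist_nonneg _
            positivity
        _ = C₀ ^ 2 * H' * r ^ (n - 1) * dist x y ^ α := by ring
    calc (∑ j ∈ Finset.range n,
          (∏ k ∈ Finset.range j, ‖h ((T.symm)^[k] y)‖) *
            ‖h ((T.symm)^[j] x) - h ((T.symm)^[j] y)‖ * (C₀ * θ ^ (n - (j + 1))))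
        ≤ ∑ j ∈ Finset.range n, C₀ ^ 2 * H' * r ^ (n - 1) * dist x y ^ α :=
          Finset.sum_le_sum hterm
      _ = n * (C₀ ^ 2 * H' * r ^ (n - 1) * dist x y ^ α) := by
          rw [Finset.sum_const, Finset.card_range, nsmul_eq_mul]
      _ = C₀ ^ 2 * H' * n * r ^ (n - 1) * dist x y ^ α := by ring
  -- per-term Hölder bound
  set c : ℕ → ℝ := fun n => C₀ * Kw' * r ^ n + C₀ ^ 2 * H' * Mw * n * r ^ (n - 1) with hcdef
  have hgHold : ∀ (n : ℕ) (x y : M),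
      ‖g n x - g n y‖ ≤ c n * dist x y ^ α := by
    intro n x y
    have hd : (0:ℝ) ≤ dist x y ^ α := Real.rpow_nonneg dist_nonneg _
    have hsplit : g n x - g n y =
        (∏ k ∈ Finset.range n, h ((T.symm)^[k] x)) * (w ((T.symm)^[n] x) - w ((T.symm)^[n] y))
        + ((∏ k ∈ Finset.range n, h ((T.symm)^[k] x))
            - ∏ k ∈ Finset.range n, h ((T.symm)^[k] y)) * w ((T.symm)^[n] y) := by
      rw [hgdef]; simp only; ring
    rw [hsplit]
    refine le_trans (norm_add_le _ _) ?_
    rw [norm_mul, norm_mul]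
    have h1 : ‖∏ k ∈ Finset.range n, h ((T.symm)^[k] x)‖ *
        ‖w ((T.symm)^[n] x) - w ((T.symm)^[n] y)‖ ≤
        (C₀ * θ ^ n) * (Kw' * ((Λ ^ α) ^ n * dist x y ^ α)) := by
      refine mul_le_mul (habsP n x) ?_ (norm_nonneg _) (by positivity)
      exact (hwHold' _ _).trans (mul_le_mul_of_nonneg_left (hdistRpow n x y) hKw'0)
    have h2 : ‖(∏ k ∈ Finset.range n, h ((T.symm)^[k] x))
          - ∏ k ∈ Finset.range n, h ((T.symm)^[k] y)‖ * ‖w ((T.symm)^[n] y)‖ ≤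
        (C₀ ^ 2 * H' * n * r ^ (n - 1) * dist x y ^ α) * Mw := by
      refine mul_le_mul (claim_P n x y) (hw _) (norm_nonneg _) ?_
      positivity
    refine (add_le_add h1 h2).trans (le_of_eq ?_)
    rw [hcdef]
    simp only
    rw [hrdef, mul_pow]
    ring
  have hcsumm : Summable c := by
    rw [hcdef]
    apply Summable.add
    · exact ((summable_geometric_of_lt_one hr0.le hr1).mul_left (C₀ * Kw'))
    · have hs1 : Summable fun n : ℕ => (n : ℝ) * r ^ n := by
        have := summable_pow_mul_geometric_of_norm_lt_one (R := ℝ) 1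
          (r := r) (by rw [Real.norm_eq_abs, abs_of_pos hr0]; exact hr1)
        refine this.congr fun n => ?_
        rw [pow_one]
      have hs : Summable fun n : ℕ => (n : ℝ) * r ^ (n - 1) := by
        rw [← summable_nat_add_iff 1]
        refine (hs1.add (summable_geometric_of_lt_one hr0.le hr1)).congr fun n => ?_
        have : n + 1 - 1 = n := by omega
        rw [this]
        push_cast
        ring
      refine (hs.mul_left (C₀ ^ 2 * H' * Mw)).congr fun n => ?_
      ring
  have hKv : ∀ x y : M, ‖v x - v y‖ ≤ (∑' n, c n) * dist x y ^ α := by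
    intro x y
    have hd : (0:ℝ) ≤ dist x y ^ α := Real.rpow_nonneg dist_nonneg _
    have hsub : v x - v y = ∑' n, (g n x - g n y) := by
      rw [hvdef]
      simp only
      rw [Summable.tsum_sub (hsummg x) (hsummg y)]
    have hcb : Summable fun n => c n * dist x y ^ α := hcsumm.mul_right _
    have hnorm : Summable fun n => ‖g n x - g n y‖ :=
      Summable.of_nonneg_of_le (fun _ => norm_nonneg _)
        (fun n => by rw [← habs]; exact hgHold n x y) hcb
    rw [hsub, habs]
    calc ‖∑' n, (g n x - g n y)‖ ≤ ∑' n, ‖g n x - g n y‖ := norm_tsum_le_tsum_norm hnorm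
      _ ≤ ∑' n, c n * dist x y ^ α := by
          refine Summable.tsum_le_tsum (fun n => ?_) hnorm hcb
          rw [← habs]; exact hgHold n x y
      _ = (∑' n, c n) * dist x y ^ α := tsum_mul_right
  -- uniqueness
  have huniq : ∀ v' : M → ℂ, Continuous v' → (∀ x : M, v' x = h x * v' (T.symm x) + w x) →
      v' = v := by
    intro v' hv'c hv'eq
    set u : M → ℂ := fun x => v' x - v x with hudef
    have hu : ∀ x : M, u x = h x * u (T.symm x) := by
      intro x
      rw [hudef]
      simp only
      rw [hv'eq x, heq x]
      ring
    have huc : Continuous u := hv'c.sub hvc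
    obtain ⟨z, -, hz⟩ := isCompact_univ.exists_isMaxOn Set.univ_nonempty
      ((continuous_norm.comp huc).continuousOn)
    have hiter : ∀ (n : ℕ) (x : M),
        u x = (∏ k ∈ Finset.range n, h ((T.symm)^[k] x)) * u ((T.symm)^[n] x) := by
      intro n
      induction n with
      | zero => intro x; simp
      | succ n ih =>
        intro x
        rw [Finset.prod_range_succ, Function.iterate_succ_apply', ih x,
          hu ((T.symm)^[n] x)]
        ring
    have hzero : ∀ x : M, u x = 0 := by
      intro x
      have hB : ∀ n : ℕ, ‖u x‖ ≤ C₀ * θ ^ n * ‖u z‖ := by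
        intro n
        rw [hiter n x, norm_mul]
        exact mul_le_mul (habsP n x) (hz (Set.mem_univ _)) (norm_nonneg _)
          (by positivity)
      have hlim : Tendsto (fun n : ℕ => C₀ * θ ^ n * ‖u z‖) atTop (nhds 0) := by
        have h1 := ((tendsto_pow_atTop_nhds_zero_of_lt_one hθ.le hθ1).const_mul
          C₀).mul_const (‖u z‖)
        simpa using h1
      have h3 : ‖u x‖ ≤ 0 := ge_of_tendsto' hlim hB
      exact norm_eq_zero.mp (le_antisymm h3 (norm_nonneg _))
    funext x
    have := hzero x
    rw [hudef] at this
    simp only at this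
    linear_combination this
  exact ⟨v, hTU, ⟨C₀ * (1 - θ)⁻¹ * Mw, fun x => by simpa using tail 0 x⟩,
    ⟨∑' n, c n, hKv⟩, hvc, heq, huniq, tail⟩
end

section
/- Let M be a compact smooth manifold, T : M → M a C¹ diffeomorphism, and μ a Borel probability measure on M invariant under T. Let f : M → ℝ be C¹, let X, Y, V be continuous vector fields on M, and let ρ : M → ℝ be a continuous function. Assume: (i) X(x) = Y(x) + V(x) − (T_*V)(x) for every x ∈ M; (ii) for every C¹ function g : M → ℝ, ∫_M dg_x(Y(x)) dμ(x) = ∫_M g·ρ dμ; (iii) ∫_M d(f∘Tⁿ)_x(V(x)) dμ(x) → 0 as n → ∞; and (iv) the series Σ_{n≥0} ∫_M (f∘Tⁿ)·ρ dμ converges absolutely. Then the series Σ_{n≥0} ∫_M d(f∘Tⁿ)_x(X(x)) dμ(x) converges, and its sum equals ∫_M df_x(V(x)) dμ(x) + Σ_{n≥0} ∫_M (f∘Tⁿ)·ρ dμ. -/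
open scoped Manifold
open MeasureTheory Filter

/-- integrability of continuous functions on a compact space -/
lemma aux_integrable {M : Type*} [TopologicalSpace M] [CompactSpace M] [MeasurableSpace M]
    [BorelSpace M] (μ : Measure M) [IsProbabilityMeasure μ] {g : M → ℝ} (hg : Continuous g) :
    Integrable g μ :=
  hg.integrable_of_hasCompactSupport (IsCompact.of_isClosed_subset isCompact_univ
    (isClosed_tsupport g) (Set.subset_univ _))

/-- continuity of `x ↦ dg_x(W x)` for a C¹ function `g` and continuous vector field `W` -/
lemma aux_cont {E : Type*} [NormedAddCommGroup E] [NormedSpace ℝ E]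
    {H : Type*} [TopologicalSpace H] (I : ModelWithCorners ℝ E H)
    {M : Type*} [TopologicalSpace M] [ChartedSpace H M] [IsManifold I ((⊤ : ℕ∞) : WithTop ℕ∞) M]
    {g : M → ℝ} (hg : ContMDiff I 𝓘(ℝ, ℝ) 1 g)
    {W : ∀ x : M, TangentSpace I x}
    (hW : Continuous fun x : M => (⟨x, W x⟩ : TangentBundle I M)) :
    Continuous fun x : M => (mfderiv I 𝓘(ℝ, ℝ) g x (W x) : ℝ) := by
  have h1 : Continuous (tangentMap I 𝓘(ℝ, ℝ) g) := hg.continuous_tangentMap le_rfl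
  have h2 : Continuous fun x : M => tangentMap I 𝓘(ℝ, ℝ) g ⟨x, W x⟩ := h1.comp hW
  exact continuous_snd.comp ((tangentBundleModelSpaceHomeomorph 𝓘(ℝ, ℝ)).continuous.comp h2)

lemma aux_iterate {E : Type*} [NormedAddCommGroup E] [NormedSpace ℝ E]
    {H : Type*} [TopologicalSpace H] (I : ModelWithCorners ℝ E H)
    {M : Type*} [TopologicalSpace M] [ChartedSpace H M] [IsManifold I ((⊤ : ℕ∞) : WithTop ℕ∞) M]
    {T : M → M} (hT : ContMDiff I I 1 T) (n : ℕ) : ContMDiff I I 1 (T^[n]) := by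
  induction n with
  | zero => simpa using contMDiff_id
  | succ n ih => rw [Function.iterate_succ]; exact ih.comp hT

/-- chain rule for the coboundary term -/
lemma aux_chain {E : Type*} [NormedAddCommGroup E] [NormedSpace ℝ E]
    {H : Type*} [TopologicalSpace H] (I : ModelWithCorners ℝ E H)
    {M : Type*} [TopologicalSpace M] [ChartedSpace H M] [IsManifold I ((⊤ : ℕ∞) : WithTop ℕ∞) M]
    {T S : M → M} (hT : ContMDiff I I 1 T) (hTS : ∀ x, T (S x) = x)
    {f : M → ℝ} (hf : ContMDiff I 𝓘(ℝ, ℝ) 1 f)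
    (V : ∀ x : M, TangentSpace I x) (n : ℕ) (x : M) :
    (mfderiv I 𝓘(ℝ, ℝ) (f ∘ T^[n]) x (mfderiv I I T (S x) (V (S x))) : ℝ) =
      (mfderiv I 𝓘(ℝ, ℝ) (f ∘ T^[n + 1]) (S x) (V (S x)) : ℝ) := by
  have hfn : ContMDiff I 𝓘(ℝ, ℝ) 1 (f ∘ T^[n]) := hf.comp (aux_iterate I hT n)
  have hcomp : f ∘ T^[n + 1] = (f ∘ T^[n]) ∘ T := by
    rw [Function.iterate_succ]; rfl
  rw [hcomp, mfderiv_comp_apply (S x) (hfn.mdifferentiableAt one_ne_zero)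
    (hT.mdifferentiableAt one_ne_zero)]
  rw [hTS x]

/-- The S3 formula (Theorem 1.2 of the paper, stated conditionally): if
`X = Y + V − T_*V`, if `ρ` represents `Y` in the sense that `μ(Yg) = μ(gρ)` for all C¹
functions `g`, if `μ(V(f∘Tⁿ)) → 0`, and if `Σ_n μ((f∘Tⁿ)ρ)` converges absolutely, then
`Σ_{n≥0} μ(X(f∘Tⁿ))` converges with sum `μ(Vf) + Σ_{n≥0} μ((f∘Tⁿ)ρ)`. -/
theorem s3_formula
    {E : Type*} [NormedAddCommGroup E] [NormedSpace ℝ E]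
    {H : Type*} [TopologicalSpace H] (I : ModelWithCorners ℝ E H)
    {M : Type*} [TopologicalSpace M] [ChartedSpace H M] [IsManifold I ((⊤ : ℕ∞) : WithTop ℕ∞) M]
    [CompactSpace M] [MeasurableSpace M] [BorelSpace M]
    (T S : M → M) (hT : ContMDiff I I 1 T) (hS : ContMDiff I I 1 S)
    (hST : ∀ x, S (T x) = x) (hTS : ∀ x, T (S x) = x)
    (μ : Measure M) [IsProbabilityMeasure μ]
    (hinv : ∀ s : Set M, MeasurableSet s → μ (T ⁻¹' s) = μ s)
    (f : M → ℝ) (hf : ContMDiff I 𝓘(ℝ, ℝ) 1 f)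
    (X Y V : ∀ x : M, TangentSpace I x)
    (hX : Continuous fun x : M => (⟨x, X x⟩ : TangentBundle I M))
    (hY : Continuous fun x : M => (⟨x, Y x⟩ : TangentBundle I M))
    (hV : Continuous fun x : M => (⟨x, V x⟩ : TangentBundle I M))
    (ρ : M → ℝ) (hρ : Continuous ρ)
    -- (i) the space-splitting decomposition `X = Y + V − T_*V`
    (hdecomp : ∀ x : M, id (α := E) (X x) =
      id (α := E) (Y x) + id (α := E) (V x) -
        id (α := E) (mfderiv I I T (S x) (V (S x))))
    -- (ii) `ρ` represents the unstable term: `μ(Yg) = μ(gρ)` for all C¹ `g`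
    (hrep : ∀ g : M → ℝ, ContMDiff I 𝓘(ℝ, ℝ) 1 g →
      ∫ x, (mfderiv I 𝓘(ℝ, ℝ) g x (Y x) : ℝ) ∂μ = ∫ x, g x * ρ x ∂μ)
    -- (iii) decay of the coboundary terms
    (hdecay : Tendsto
      (fun n : ℕ => ∫ x, (mfderiv I 𝓘(ℝ, ℝ) (f ∘ T^[n]) x (V x) : ℝ) ∂μ)
      atTop (nhds 0))
    -- (iv) absolute convergence of the correlation series
    (hsum : Summable fun n : ℕ => |∫ x, f (T^[n] x) * ρ x ∂μ|) :
    Tendsto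
      (fun N : ℕ => ∑ n ∈ Finset.range N,
        ∫ x, (mfderiv I 𝓘(ℝ, ℝ) (f ∘ T^[n]) x (X x) : ℝ) ∂μ)
      atTop
      (nhds ((∫ x, (mfderiv I 𝓘(ℝ, ℝ) f x (V x) : ℝ) ∂μ) +
        ∑' n : ℕ, ∫ x, f (T^[n] x) * ρ x ∂μ)) := by
  classical
  -- notation
  set b : ℕ → ℝ := fun n => ∫ x, f (T^[n] x) * ρ x ∂μ with hb
  set c : ℕ → ℝ := fun n => ∫ x, (mfderiv I 𝓘(ℝ, ℝ) (f ∘ T^[n]) x (V x) : ℝ) ∂μ with hc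
  have hfn : ∀ n : ℕ, ContMDiff I 𝓘(ℝ, ℝ) 1 (f ∘ T^[n]) :=
    fun n => hf.comp (aux_iterate I hT n)
  -- μ is S-invariant
  have hSm : Measurable S := hS.continuous.measurable
  have hTm : Measurable T := hT.continuous.measurable
  have mapT : μ.map T = μ := by
    refine Measure.ext fun s hs => ?_
    rw [Measure.map_apply hTm hs]; exact hinv s hs
  have mapS : μ.map S = μ := by
    have : S ∘ T = id := funext hST
    calc μ.map S = (μ.map T).map S := by rw [mapT]
    _ = μ.map (S ∘ T) := Measure.map_map hSm hTm
    _ = μ := by rw [this, Measure.map_id]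
  have intS : ∀ h : M → ℝ, Continuous h → ∫ x, h (S x) ∂μ = ∫ x, h x ∂μ := by
    intro h hh
    rw [← integral_map hSm.aemeasurable hh.aestronglyMeasurable, mapS]
  -- the coboundary term
  have hWcont : ∀ n : ℕ,
      Continuous fun x : M => (mfderiv I 𝓘(ℝ, ℝ) (f ∘ T^[n]) x
        (mfderiv I I T (S x) (V (S x))) : ℝ) := by
    intro n
    have : (fun x : M => (mfderiv I 𝓘(ℝ, ℝ) (f ∘ T^[n]) x
        (mfderiv I I T (S x) (V (S x))) : ℝ)) =
        (fun y : M => (mfderiv I 𝓘(ℝ, ℝ) (f ∘ T^[n + 1]) y (V y) : ℝ)) ∘ S := by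
      funext x
      exact aux_chain I hT hTS hf V n x
    rw [this]
    exact (aux_cont I (hfn (n + 1)) hV).comp hS.continuous
  have hWint : ∀ n : ℕ,
      ∫ x, (mfderiv I 𝓘(ℝ, ℝ) (f ∘ T^[n]) x (mfderiv I I T (S x) (V (S x))) : ℝ) ∂μ
        = c (n + 1) := by
    intro n
    have h1 : ∫ x, (mfderiv I 𝓘(ℝ, ℝ) (f ∘ T^[n]) x
        (mfderiv I I T (S x) (V (S x))) : ℝ) ∂μ =
        ∫ x, (fun y : M => (mfderiv I 𝓘(ℝ, ℝ) (f ∘ T^[n + 1]) y (V y) : ℝ)) (S x) ∂μ := by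
      refine integral_congr_ae (Filter.Eventually.of_forall fun x => ?_)
      exact aux_chain I hT hTS hf V n x
    rw [h1, intS _ (aux_cont I (hfn (n + 1)) hV)]
  -- pointwise decomposition of the integrand
  have hptwise : ∀ n : ℕ, ∀ x : M,
      (mfderiv I 𝓘(ℝ, ℝ) (f ∘ T^[n]) x (X x) : ℝ) =
        (mfderiv I 𝓘(ℝ, ℝ) (f ∘ T^[n]) x (Y x) : ℝ) +
        (mfderiv I 𝓘(ℝ, ℝ) (f ∘ T^[n]) x (V x) : ℝ) -
        (mfderiv I 𝓘(ℝ, ℝ) (f ∘ T^[n]) x (mfderiv I I T (S x) (V (S x))) : ℝ) := by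
    intro n x
    have hd := hdecomp x
    simp only [id] at hd
    rw [hd]
    have h1 := (mfderiv I 𝓘(ℝ, ℝ) (f ∘ T^[n]) x).map_sub (Y x + V x) (mfderiv I I T (S x) (V (S x)))
    have h2 := (mfderiv I 𝓘(ℝ, ℝ) (f ∘ T^[n]) x).map_add (Y x) (V x)
    exact h1.trans (congrArg (· - _) h2)
  -- per-term identity
  have hstep : ∀ n : ℕ,
      ∫ x, (mfderiv I 𝓘(ℝ, ℝ) (f ∘ T^[n]) x (X x) : ℝ) ∂μ = b n + c n - c (n + 1) := by
    intro n
    have e1 : ∫ x, (mfderiv I 𝓘(ℝ, ℝ) (f ∘ T^[n]) x (X x) : ℝ) ∂μ =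
        ∫ x, ((mfderiv I 𝓘(ℝ, ℝ) (f ∘ T^[n]) x (Y x) : ℝ) +
          (mfderiv I 𝓘(ℝ, ℝ) (f ∘ T^[n]) x (V x) : ℝ) -
          (mfderiv I 𝓘(ℝ, ℝ) (f ∘ T^[n]) x (mfderiv I I T (S x) (V (S x))) : ℝ)) ∂μ :=
      integral_congr_ae (Filter.Eventually.of_forall fun x => hptwise n x)
    have iY : Integrable (fun x => (mfderiv I 𝓘(ℝ, ℝ) (f ∘ T^[n]) x (Y x) : ℝ)) μ :=
      aux_integrable μ (aux_cont I (hfn n) hY)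
    have iV : Integrable (fun x => (mfderiv I 𝓘(ℝ, ℝ) (f ∘ T^[n]) x (V x) : ℝ)) μ :=
      aux_integrable μ (aux_cont I (hfn n) hV)
    have iYV : Integrable (fun x => (mfderiv I 𝓘(ℝ, ℝ) (f ∘ T^[n]) x (Y x) : ℝ) +
        (mfderiv I 𝓘(ℝ, ℝ) (f ∘ T^[n]) x (V x) : ℝ)) μ := iY.add iV
    rw [e1]
    refine (integral_sub iYV (aux_integrable μ (hWcont n))).trans ?_
    refine (congrArg (· - _) (integral_add iY iV)).trans ?_
    rw [hWint n]
    have : ∫ x, (mfderiv I 𝓘(ℝ, ℝ) (f ∘ T^[n]) x (Y x) : ℝ) ∂μ = b n := by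
      rw [hrep (f ∘ T^[n]) (hfn n)]; rfl
    rw [this]
  -- sum over n < N
  have hpartial : ∀ N : ℕ,
      ∑ n ∈ Finset.range N, ∫ x, (mfderiv I 𝓘(ℝ, ℝ) (f ∘ T^[n]) x (X x) : ℝ) ∂μ =
        (∑ n ∈ Finset.range N, b n) + (c 0 - c N) := by
    intro N
    calc ∑ n ∈ Finset.range N, ∫ x, (mfderiv I 𝓘(ℝ, ℝ) (f ∘ T^[n]) x (X x) : ℝ) ∂μ
        = ∑ n ∈ Finset.range N, (b n + (c n - c (n + 1))) := by
          refine Finset.sum_congr rfl fun n _ => ?_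
          rw [hstep n]; ring
      _ = (∑ n ∈ Finset.range N, b n) + ∑ n ∈ Finset.range N, (c n - c (n + 1)) := by
          rw [Finset.sum_add_distrib]
      _ = (∑ n ∈ Finset.range N, b n) + (c 0 - c N) := by
          rw [Finset.sum_range_sub' c N]
  have hc0 : c 0 = ∫ x, (mfderiv I 𝓘(ℝ, ℝ) f x (V x) : ℝ) ∂μ := by
    simp only [hc, Function.iterate_zero, Function.comp_id]; rfl
  -- limits
  have hbsum : Summable b := hsum.of_abs
  have h1 : Tendsto (fun N : ℕ => ∑ n ∈ Finset.range N, b n) atTop (nhds (∑' n, b n)) :=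
    hbsum.hasSum.tendsto_sum_nat
  have h2 : Tendsto (fun N : ℕ => (∑ n ∈ Finset.range N, b n) + (c 0 - c N)) atTop
      (nhds ((∑' n, b n) + (c 0 - 0))) :=
    h1.add (tendsto_const_nhds.sub hdecay)
  have h3 : (∑' n, b n) + (c 0 - 0) =
      (∫ x, (mfderiv I 𝓘(ℝ, ℝ) f x (V x) : ℝ) ∂μ) + ∑' n : ℕ, b n := by
    rw [sub_zero, hc0]; ring
  rw [h3] at h2
  refine h2.congr fun N => (hpartial N).symm
end
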